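/- arXiv:1812.10214 — 2 statements merged into one kernel-verified Lean document; each statement's English description precedes it below -/
import Mathlib

section
/- Let k ≥ 1 and N ≥ 1 be integers and (a_n) a sequence of complex numbers. Then Σ_{χ mod k} |Σ_{n ≤ N} a_n χ(n)|² ≤ φ(k)·(N/k + 1)·Σ_{n ≤ N} |a_n|², where the outer sum runs over all Dirichlet characters modulo k. -/
open Finset

lemma fiber_card_le_aux (k N : ℕ) (hk : 1 ≤ k) (r : ZMod k) :
    ((Finset.Icc 1 N).filter (fun (n : ℕ) => ((n : ℕ) : ZMod k) = r)).card ≤ N / k + 1 := by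
  classical
  have : ((Finset.Icc 1 N).filter (fun (n : ℕ) => ((n : ℕ) : ZMod k) = r)).card
      ≤ (Finset.range (N / k + 1)).card := by
    apply Finset.card_le_card_of_injOn (fun n => n / k)
    · intro n hn
      simp only [Finset.mem_coe, Finset.mem_filter, Finset.mem_Icc] at hn
      simp only [Finset.mem_coe, Finset.mem_range]
      exact Nat.lt_succ_of_le (Nat.div_le_div_right hn.1.2)
    · intro m hm n hn h
      simp only [Finset.coe_filter, Set.mem_setOf_eq, Finset.mem_Icc] at hm hn
      have hmod : m % k = n % k := by
        have := hm.2.trans hn.2.symm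
        rwa [ZMod.natCast_eq_natCast_iff'] at this
      have hdiv : m / k = n / k := h
      calc m = k * (m / k) + m % k := (Nat.div_add_mod m k).symm
        _ = k * (n / k) + n % k := by rw [hmod, hdiv]
        _ = n := Nat.div_add_mod n k
  simpa using this

/-- Mean value estimate for Dirichlet character sums:
`∑_{χ mod k} |∑_{n ≤ N} a_n χ(n)|² ≤ φ(k)(N/k + 1) ∑_{n ≤ N} |a_n|²`. -/
theorem mean_value_char_sum (k N : ℕ) (hk : 1 ≤ k) (hN : 1 ≤ N) (a : ℕ → ℂ) :
    ∑ χ : DirichletCharacter ℂ k, ‖∑ n ∈ Finset.Icc 1 N, a n * χ (n : ZMod k)‖ ^ 2 ≤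
      (Nat.totient k : ℝ) * ((N : ℝ) / k + 1) * ∑ n ∈ Finset.Icc 1 N, ‖a n‖ ^ 2 := by
  classical
  haveI : NeZero k := ⟨by omega⟩
  set s : Finset ℕ := Finset.Icc 1 N with hs
  set F : ZMod k → ℂ := fun r => ∑ n ∈ s.filter (fun (n : ℕ) => ((n : ℕ) : ZMod k) = r), a n with hF
  -- Step 1: fiberwise decomposition of the inner sum
  have h1 : ∀ χ : DirichletCharacter ℂ k, ∑ n ∈ s, a n * χ (n : ZMod k)
      = ∑ r : ZMod k, F r * χ r := by
    intro χ
    rw [← Finset.sum_fiberwise (s := s) (g := fun (n : ℕ) => ((n : ℕ) : ZMod k))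
      (f := fun n => a n * χ (n : ZMod k))]
    refine Finset.sum_congr rfl fun r _ => ?_
    rw [hF]
    rw [Finset.sum_mul]
    refine Finset.sum_congr rfl fun n hn => ?_
    rw [(Finset.mem_filter.mp hn).2]
  -- Step 2: orthogonality
  have orth : ∀ r t : ZMod k, ∑ χ : DirichletCharacter ℂ k, χ r * (starRingEnd ℂ) (χ t)
      = if t = r ∧ IsUnit t then (k.totient : ℂ) else 0 := by
    intro r t
    by_cases ht : IsUnit t
    · have hconj : ∀ χ : DirichletCharacter ℂ k, (starRingEnd ℂ) (χ t) = χ t⁻¹ := by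
        intro χ
        have hn1 : ‖χ t‖ = 1 := by
          have := χ.unit_norm_eq_one ht.unit
          rwa [IsUnit.unit_spec] at this
        have hconjmul : (starRingEnd ℂ) (χ t) * χ t = 1 := by
          rw [mul_comm, Complex.mul_conj, Complex.normSq_eq_norm_sq, hn1]
          norm_num
        have hmul : χ t * χ t⁻¹ = 1 := by
          rw [← map_mul, ZMod.mul_inv_of_unit t ht, map_one]
        calc (starRingEnd ℂ) (χ t) = (starRingEnd ℂ) (χ t) * (χ t * χ t⁻¹) := by
              rw [hmul, mul_one]
          _ = ((starRingEnd ℂ) (χ t) * χ t) * χ t⁻¹ := by ring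
          _ = χ t⁻¹ := by rw [hconjmul, one_mul]
      simp only [hconj]
      have : ∑ χ : DirichletCharacter ℂ k, χ r * χ t⁻¹
          = ∑ χ : DirichletCharacter ℂ k, χ t⁻¹ * χ r :=
        Finset.sum_congr rfl fun χ _ => mul_comm _ _
      rw [this, DirichletCharacter.sum_char_inv_mul_char_eq ℂ ht r]
      simp [ht]
    · simp only [MulChar.map_nonunit _ ht, map_zero, mul_zero, Finset.sum_const_zero]
      simp [ht]
  -- Step 3: Parseval identity
  have hC : ∑ χ : DirichletCharacter ℂ k,
      ((∑ r : ZMod k, F r * χ r) * (starRingEnd ℂ) (∑ r : ZMod k, F r * χ r))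
      = (k.totient : ℂ) * ∑ r : ZMod k, if IsUnit r then ((‖F r‖ : ℂ) ^ 2) else 0 := by
    calc ∑ χ : DirichletCharacter ℂ k,
        ((∑ r : ZMod k, F r * χ r) * (starRingEnd ℂ) (∑ r : ZMod k, F r * χ r))
        = ∑ χ : DirichletCharacter ℂ k, ∑ r : ZMod k, ∑ t : ZMod k,
            (F r * (starRingEnd ℂ) (F t)) * (χ r * (starRingEnd ℂ) (χ t)) := by
          refine Finset.sum_congr rfl fun χ _ => ?_
          rw [map_sum, Finset.sum_mul_sum]
          refine Finset.sum_congr rfl fun r _ => Finset.sum_congr rfl fun t _ => ?_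
          rw [map_mul]; ring
      _ = ∑ r : ZMod k, ∑ t : ZMod k,
            (F r * (starRingEnd ℂ) (F t)) * ∑ χ : DirichletCharacter ℂ k,
              (χ r * (starRingEnd ℂ) (χ t)) := by
          rw [Finset.sum_comm]
          refine Finset.sum_congr rfl fun r _ => ?_
          rw [Finset.sum_comm]
          refine Finset.sum_congr rfl fun t _ => ?_
          rw [Finset.mul_sum]
      _ = ∑ r : ZMod k, (if IsUnit r then (k.totient : ℂ) * ((‖F r‖ : ℂ) ^ 2) else 0) := by
          refine Finset.sum_congr rfl fun r _ => ?_
          rw [Finset.sum_eq_single r]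
          · rw [orth r r]
            by_cases hr : IsUnit r
            · simp only [hr, and_self, if_true]
              rw [Complex.mul_conj]
              rw [Complex.normSq_eq_norm_sq]
              push_cast
              ring
            · simp [hr]
          · intro t _ htr
            rw [orth r t]
            simp [htr]
          · simp
      _ = (k.totient : ℂ) * ∑ r : ZMod k, if IsUnit r then ((‖F r‖ : ℂ) ^ 2) else 0 := by
          rw [Finset.mul_sum]
          refine Finset.sum_congr rfl fun r _ => ?_
          split <;> simp
  have key : ∑ χ : DirichletCharacter ℂ k, ‖∑ n ∈ s, a n * χ (n : ZMod k)‖ ^ 2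
      = (k.totient : ℝ) * ∑ r : ZMod k, if IsUnit r then ‖F r‖ ^ 2 else 0 := by
    have e1 : ∀ χ : DirichletCharacter ℂ k, ‖∑ n ∈ s, a n * χ (n : ZMod k)‖ ^ 2
        = ((∑ r : ZMod k, F r * χ r) * (starRingEnd ℂ) (∑ r : ZMod k, F r * χ r)).re := by
      intro χ
      rw [h1 χ, Complex.mul_conj, Complex.normSq_eq_norm_sq]
      exact (Complex.ofReal_re _).symm
    calc ∑ χ : DirichletCharacter ℂ k, ‖∑ n ∈ s, a n * χ (n : ZMod k)‖ ^ 2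
        = ∑ χ : DirichletCharacter ℂ k,
            ((∑ r : ZMod k, F r * χ r) * (starRingEnd ℂ) (∑ r : ZMod k, F r * χ r)).re :=
          Finset.sum_congr rfl fun χ _ => e1 χ
      _ = (∑ χ : DirichletCharacter ℂ k,
            ((∑ r : ZMod k, F r * χ r) * (starRingEnd ℂ) (∑ r : ZMod k, F r * χ r))).re :=
          (Complex.re_sum _ _).symm
      _ = ((k.totient : ℂ) * ∑ r : ZMod k, if IsUnit r then ((‖F r‖ : ℂ) ^ 2) else 0).re := by
          rw [hC]
      _ = (k.totient : ℝ) * ∑ r : ZMod k, if IsUnit r then ‖F r‖ ^ 2 else 0 := by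
          have : (∑ r : ZMod k, if IsUnit r then ((‖F r‖ : ℂ) ^ 2) else 0)
              = (((∑ r : ZMod k, if IsUnit r then ‖F r‖ ^ 2 else 0 : ℝ)) : ℂ) := by
            push_cast
            refine Finset.sum_congr rfl fun r _ => ?_
            split <;> simp
          rw [this, ← Complex.ofReal_natCast, ← Complex.ofReal_mul, Complex.ofReal_re]
  rw [key]
  -- Step 4: counting bound
  have bound : ∑ r : ZMod k, (if IsUnit r then ‖F r‖ ^ 2 else 0)
      ≤ ((N : ℝ) / k + 1) * ∑ n ∈ s, ‖a n‖ ^ 2 := by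
    have h2 : ∀ r : ZMod k, ‖F r‖ ^ 2
        ≤ ((N : ℝ) / k + 1) * ∑ n ∈ s.filter (fun (n : ℕ) => ((n : ℕ) : ZMod k) = r), ‖a n‖ ^ 2 := by
      intro r
      set t : Finset ℕ := s.filter (fun (n : ℕ) => ((n : ℕ) : ZMod k) = r) with htdef
      have c1 : ‖F r‖ ≤ ∑ n ∈ t, ‖a n‖ := norm_sum_le _ _
      have c2 : ‖F r‖ ^ 2 ≤ (∑ n ∈ t, ‖a n‖) ^ 2 := by
        apply pow_le_pow_left₀ (norm_nonneg _) c1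
      have c3 : (∑ n ∈ t, ‖a n‖) ^ 2 ≤ (t.card : ℝ) * ∑ n ∈ t, ‖a n‖ ^ 2 :=
        sq_sum_le_card_mul_sum_sq
      have c4 : (t.card : ℝ) ≤ (N : ℝ) / k + 1 := by
        have := fiber_card_le_aux k N hk r
        calc (t.card : ℝ) ≤ ((N / k + 1 : ℕ) : ℝ) := by exact_mod_cast this
          _ ≤ (N : ℝ) / k + 1 := by
            push_cast
            have : ((N / k : ℕ) : ℝ) ≤ (N : ℝ) / k := Nat.cast_div_le
            linarith
      calc ‖F r‖ ^ 2 ≤ (t.card : ℝ) * ∑ n ∈ t, ‖a n‖ ^ 2 := c2.trans c3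
        _ ≤ ((N : ℝ) / k + 1) * ∑ n ∈ t, ‖a n‖ ^ 2 := by
            apply mul_le_mul_of_nonneg_right c4
            positivity
    calc ∑ r : ZMod k, (if IsUnit r then ‖F r‖ ^ 2 else 0)
        ≤ ∑ r : ZMod k, ((N : ℝ) / k + 1) * ∑ n ∈ s.filter (fun (n : ℕ) => ((n : ℕ) : ZMod k) = r), ‖a n‖ ^ 2 := by
          refine Finset.sum_le_sum fun r _ => ?_
          split
          · exact h2 r
          · positivity
      _ = ((N : ℝ) / k + 1) * ∑ r : ZMod k, ∑ n ∈ s.filter (fun (n : ℕ) => ((n : ℕ) : ZMod k) = r), ‖a n‖ ^ 2 := by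
          rw [Finset.mul_sum]
      _ = ((N : ℝ) / k + 1) * ∑ n ∈ s, ‖a n‖ ^ 2 := by
          rw [Finset.sum_fiberwise (s := s) (g := fun (n : ℕ) => ((n : ℕ) : ZMod k)) (f := fun n => ‖a n‖ ^ 2)]
  calc (k.totient : ℝ) * ∑ r : ZMod k, (if IsUnit r then ‖F r‖ ^ 2 else 0)
      ≤ (k.totient : ℝ) * (((N : ℝ) / k + 1) * ∑ n ∈ s, ‖a n‖ ^ 2) :=
        mul_le_mul_of_nonneg_left bound (by positivity)
    _ = (k.totient : ℝ) * ((N : ℝ) / k + 1) * ∑ n ∈ s, ‖a n‖ ^ 2 := by ring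
end

section
/- Let k > 2 and suppose that for every non-principal Dirichlet character χ mod k one has |Σ_{p ≤ y} χ(p)| ≤ Δ. Let x ≥ 1, M ≥ 1, and let (a_m), (b_n) be complex sequences with |a_m| ≤ 1 and |b_n| ≤ 1. Then Σ_{χ ≠ χ₀ mod k} |Σ_{M < m ≤ 2M} a_m χ(m)| · |Σ_{n ≤ x/M} b_n χ(n)| · |Σ_{p ≤ y} χ(p)| ≤ Δ · φ(k) · ((M/k + 1)·M)^{1/2} · ((x/(Mk) + 1)·(x/M))^{1/2}. -/
open Finset
open scoped Classical
noncomputable section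

namespace TypeIIAux

variable {k : ℕ} [NeZero k]

lemma ringInverse_eq {n : ZMod k} (hu : IsUnit n) : Ring.inverse n = n⁻¹ := by
  have h1 : Ring.inverse n * n = 1 := Ring.inverse_mul_cancel n hu
  calc Ring.inverse n = Ring.inverse n * (n * n⁻¹) := by
        rw [ZMod.mul_inv_of_unit n hu, mul_one]
    _ = (Ring.inverse n * n) * n⁻¹ := by ring
    _ = n⁻¹ := by rw [h1, one_mul]

lemma orth (m n : ZMod k) :
    ∑ χ : DirichletCharacter ℂ k, χ m * (starRingEnd ℂ) (χ n) =
      if IsUnit n ∧ m = n then (k.totient : ℂ) else 0 := by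
  by_cases hu : IsUnit n
  · have h1 : ∀ χ : DirichletCharacter ℂ k, χ m * (starRingEnd ℂ) (χ n) = χ n⁻¹ * χ m := by
      intro χ
      have : (starRingEnd ℂ) (χ n) = χ⁻¹ n := by simpa using MulChar.star_apply' χ n
      rw [this, mul_comm, MulChar.inv_apply, ringInverse_eq hu]
    simp only [h1]
    rw [DirichletCharacter.sum_char_inv_mul_char_eq ℂ hu m]
    simp [hu, eq_comm]
  · have h1 : ∀ χ : DirichletCharacter ℂ k, χ m * (starRingEnd ℂ) (χ n) = 0 := by
      intro χ
      rw [χ.map_nonunit hu, map_zero, mul_zero]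
    simp [h1, hu]

/-- Mean value estimate for character sums. -/
lemma mean_value (S : Finset ℕ) (c : ℕ → ℂ) (T : ℝ)
    (hT : ∀ r : ZMod k, (((S.filter fun n : ℕ => (n : ZMod k) = r).card : ℝ)) ≤ T) :
    ∑ χ : DirichletCharacter ℂ k, ‖∑ n ∈ S, c n * χ (n : ZMod k)‖ ^ 2 ≤
      (k.totient : ℝ) * T * ∑ n ∈ S, ‖c n‖ ^ 2 := by
  have hT0 : 0 ≤ T := le_trans (by positivity) (hT 0)
  -- complex identity
  have key : ((∑ χ : DirichletCharacter ℂ k, ‖∑ n ∈ S, c n * χ (n : ZMod k)‖ ^ 2 : ℝ) : ℂ)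
      = ∑ m ∈ S, ∑ n ∈ S, (c m * (starRingEnd ℂ) (c n)) *
          (if IsUnit ((n : ZMod k)) ∧ (m : ZMod k) = (n : ZMod k) then (k.totient : ℂ) else 0) := by
    push_cast
    have : ∀ χ : DirichletCharacter ℂ k,
        ((‖∑ n ∈ S, c n * χ (n : ZMod k)‖ : ℂ) ^ 2)
          = ∑ m ∈ S, ∑ n ∈ S, (c m * (starRingEnd ℂ) (c n)) *
              (χ (m : ZMod k) * (starRingEnd ℂ) (χ (n : ZMod k)))  := by
      intro χ
      rw [← Complex.mul_conj', map_sum, Finset.sum_mul_sum]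
      refine Finset.sum_congr rfl fun m _ => Finset.sum_congr rfl fun n _ => ?_
      rw [map_mul]; ring
    rw [Finset.sum_congr rfl fun χ _ => this χ, Finset.sum_comm]
    refine Finset.sum_congr rfl fun m _ => ?_
    rw [Finset.sum_comm]
    refine Finset.sum_congr rfl fun n _ => ?_
    rw [← Finset.mul_sum, orth]
  -- real bound via norms
  have hnorm : ∑ χ : DirichletCharacter ℂ k, ‖∑ n ∈ S, c n * χ (n : ZMod k)‖ ^ 2 ≤
      ∑ m ∈ S, ∑ n ∈ S,
        (if (m : ZMod k) = (n : ZMod k) then (k.totient : ℝ) * (‖c m‖ * ‖c n‖) else 0) := by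
    have h0 : (∑ χ : DirichletCharacter ℂ k, ‖∑ n ∈ S, c n * χ (n : ZMod k)‖ ^ 2)
        = ‖((∑ χ : DirichletCharacter ℂ k, ‖∑ n ∈ S, c n * χ (n : ZMod k)‖ ^ 2 : ℝ) : ℂ)‖ := by
      rw [Complex.norm_real, Real.norm_of_nonneg (by positivity)]
    rw [h0, key]
    refine le_trans (norm_sum_le _ _) (Finset.sum_le_sum fun m _ => ?_)
    refine le_trans (norm_sum_le _ _) (Finset.sum_le_sum fun n _ => ?_)
    by_cases h : IsUnit ((n : ZMod k)) ∧ (m : ZMod k) = (n : ZMod k)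
    · rw [if_pos h, if_pos h.2, norm_mul, norm_mul, Complex.norm_natCast, RCLike.norm_conj]
      exact le_of_eq (by ring)
    · rw [if_neg h, mul_zero, norm_zero]
      split <;> positivity
  refine hnorm.trans ?_
  -- combinatorial bound
  have step1 : ∀ m ∈ S, (∑ n ∈ S,
      (if (m : ZMod k) = (n : ZMod k) then (k.totient : ℝ) * (‖c m‖ * ‖c n‖) else 0))
      = (k.totient : ℝ) * (‖c m‖ * ∑ n ∈ S.filter (fun n : ℕ => (n : ZMod k) = (m : ZMod k)), ‖c n‖) := by
    intro m _
    simp only [Finset.mul_sum, Finset.sum_filter]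
    refine Finset.sum_congr rfl fun n _ => ?_
    by_cases h : (m : ZMod k) = (n : ZMod k)
    · rw [if_pos h, if_pos h.symm]
    · rw [if_neg h, if_neg (fun hh => h hh.symm)]; simp
  rw [Finset.sum_congr rfl step1, ← Finset.mul_sum, mul_assoc]
  refine mul_le_mul_of_nonneg_left ?_ (by positivity)
  -- now : ∑_{m∈S} ‖c m‖ * (∑_{n∈S_{m̄}} ‖c n‖) ≤ T * ∑ ‖c‖²
  have fib := Finset.sum_fiberwise S (fun n : ℕ => (n : ZMod k))
    (fun m => ‖c m‖ * ∑ n ∈ S.filter (fun n : ℕ => (n : ZMod k) = (m : ZMod k)), ‖c n‖)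
  rw [← fib]
  have fib2 := Finset.sum_fiberwise S (fun n : ℕ => (n : ZMod k)) (fun n => ‖c n‖ ^ 2)
  rw [← fib2, Finset.mul_sum]
  refine Finset.sum_le_sum fun r _ => ?_
  have hcongr : ∀ m ∈ S.filter (fun n : ℕ => (n : ZMod k) = r),
      ‖c m‖ * (∑ n ∈ S.filter (fun n : ℕ => (n : ZMod k) = (m : ZMod k)), ‖c n‖)
        = ‖c m‖ * ∑ n ∈ S.filter (fun n : ℕ => (n : ZMod k) = r), ‖c n‖ := by
    intro m hm
    rw [Finset.mem_filter] at hm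
    rw [hm.2]
  rw [Finset.sum_congr rfl hcongr, ← Finset.sum_mul]
  set Sr := S.filter (fun n : ℕ => (n : ZMod k) = r) with hSr
  have hCS : (∑ n ∈ Sr, ‖c n‖) ^ 2 ≤ (Sr.card : ℝ) * ∑ n ∈ Sr, ‖c n‖ ^ 2 := by
    exact_mod_cast sq_sum_le_card_mul_sum_sq (s := Sr) (f := fun n => ‖c n‖)
  calc (∑ n ∈ Sr, ‖c n‖) * (∑ n ∈ Sr, ‖c n‖) = (∑ n ∈ Sr, ‖c n‖) ^ 2 := (sq _).symm
    _ ≤ (Sr.card : ℝ) * ∑ n ∈ Sr, ‖c n‖ ^ 2 := hCS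
    _ ≤ T * ∑ n ∈ Sr, ‖c n‖ ^ 2 := by
        refine mul_le_mul_of_nonneg_right (hT r) (by positivity)

/-- Counting integers in an interval lying in a residue class. -/
lemma card_residue_Ioc (A B : ℕ) (hAB : A ≤ B) (r : ZMod k) :
    (((Finset.Ioc A B).filter fun n : ℕ => (n : ZMod k) = r).card : ℝ) ≤ ((B : ℝ) - A) / k + 1 := by
  have hk0 : 0 < k := Nat.pos_of_ne_zero (NeZero.ne k)
  have hcard : ((Finset.Ioc A B).filter fun n : ℕ => (n : ZMod k) = r).card ≤ (B - A - 1) / k + 1 := by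
    have : ((Finset.Ioc A B).filter fun n : ℕ => (n : ZMod k) = r).card
        ≤ (Finset.range ((B - A - 1) / k + 1)).card := by
      refine Finset.card_le_card_of_injOn (fun n => (n - (A + 1)) / k) ?_ ?_
      · intro n hn
        rw [Finset.mem_coe, Finset.mem_filter, Finset.mem_Ioc] at hn
        rw [Finset.mem_coe, Finset.mem_range, Nat.lt_succ_iff]
        exact Nat.div_le_div_right (by omega)
      · intro n1 h1 n2 h2 heq
        rw [Finset.mem_coe, Finset.mem_filter, Finset.mem_Ioc] at h1 h2
        have heq' : (n1 - (A+1)) / k = (n2 - (A+1)) / k := heq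
        have hm : n1 % k = n2 % k := by
          rw [← ZMod.natCast_eq_natCast_iff']
          rw [h1.2, h2.2]
        have g1 : A + 1 ≤ n1 := h1.1.1
        have g2 : A + 1 ≤ n2 := h2.1.1
        have hm' : (n1 - (A+1)) % k = (n2 - (A+1)) % k := by
          have hmod : n1 ≡ n2 [MOD k] := hm
          have d1 : n1 - (A+1) ≡ n2 - (A+1) [MOD k] :=
            (Nat.ModEq.add_right_cancel' (A+1))
              (show n1 - (A+1) + (A+1) ≡ n2 - (A+1) + (A+1) [MOD k] by
                rwa [Nat.sub_add_cancel g1, Nat.sub_add_cancel g2])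
          exact d1
        have hsub : n1 - (A+1) = n2 - (A+1) := by
          conv_lhs => rw [← Nat.div_add_mod (n1 - (A+1)) k]
          conv_rhs => rw [← Nat.div_add_mod (n2 - (A+1)) k]
          rw [heq', hm']
        omega
      -- done
    simpa using this
  have : (((Finset.Ioc A B).filter fun n : ℕ => (n : ZMod k) = r).card : ℝ)
      ≤ (((B - A - 1) / k + 1 : ℕ) : ℝ) := by exact_mod_cast hcard
  refine this.trans ?_
  push_cast
  have h1 : (((B - A - 1) / k : ℕ) : ℝ) ≤ ((B - A - 1 : ℕ) : ℝ) / (k : ℝ) := Nat.cast_div_le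
  refine add_le_add ?_ le_rfl
  refine h1.trans ?_
  have h2 : ((B - A - 1 : ℕ) : ℝ) ≤ (B : ℝ) - A := by
    have h3 : ((B - A - 1 : ℕ) : ℝ) ≤ ((B - A : ℕ) : ℝ) := by
      exact_mod_cast Nat.sub_le (B - A) 1
    rwa [Nat.cast_sub hAB] at h3
  gcongr

end TypeIIAux

set_option maxHeartbeats 1000000 in
/-- The core Type II inequality: under a bound `Δ` for prime character sums, the
sum over non-principal characters `χ` mod `k` of
`|∑_{M < m ≤ 2M} a_m χ(m)| · |∑_{n ≤ x/M} b_n χ(n)| · |∑_{p ≤ y} χ(p)|` is at most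
`Δ · φ(k) · ((M/k + 1)M)^{1/2} · ((x/(Mk) + 1)(x/M))^{1/2}`. -/
theorem type_II_core (k : ℕ) (hk : 2 < k) (y M : ℕ) (hM : 1 ≤ M) (x : ℝ) (hx : 1 ≤ x)
    (Δ : ℝ)
    (hΔ : ∀ χ : DirichletCharacter ℂ k, χ ≠ 1 →
      ‖∑ p ∈ (Finset.Icc 1 y).filter Nat.Prime, χ (p : ZMod k)‖ ≤ Δ)
    (a b : ℕ → ℂ) (ha : ∀ m, ‖a m‖ ≤ 1) (hb : ∀ n, ‖b n‖ ≤ 1) :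
    ∑ χ ∈ Finset.univ.filter (fun χ : DirichletCharacter ℂ k => χ ≠ 1),
        ‖∑ m ∈ Finset.Ioc M (2 * M), a m * χ (m : ZMod k)‖ *
        ‖∑ n ∈ Finset.Icc 1 ⌊x / M⌋₊, b n * χ (n : ZMod k)‖ *
        ‖∑ p ∈ (Finset.Icc 1 y).filter Nat.Prime, χ (p : ZMod k)‖ ≤
      Δ * (Nat.totient k : ℝ) * Real.sqrt (((M : ℝ) / k + 1) * M) *
        Real.sqrt ((x / ((M : ℝ) * k) + 1) * (x / M)) := by
  haveI : NeZero k := ⟨by omega⟩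
  have hk0 : 0 < k := by omega
  set N := ⌊x / (M : ℝ)⌋₊ with hN
  set A := fun χ : DirichletCharacter ℂ k =>
    ‖∑ m ∈ Finset.Ioc M (2 * M), a m * χ (m : ZMod k)‖ with hA'
  set B := fun χ : DirichletCharacter ℂ k =>
    ‖∑ n ∈ Finset.Icc 1 N, b n * χ (n : ZMod k)‖ with hB'
  have hMpos : (0 : ℝ) < (M : ℝ) := by exact_mod_cast hM
  have hNle : (N : ℝ) ≤ x / M := Nat.floor_le (by positivity)
  -- Δ is nonnegative
  obtain ⟨χ₁, hχ₁⟩ : ∃ χ : DirichletCharacter ℂ k, χ ≠ 1 := by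
    have hcard : 1 < Fintype.card (DirichletCharacter ℂ k) := by
      rw [← Nat.card_eq_fintype_card,
        DirichletCharacter.card_eq_totient_of_hasEnoughRootsOfUnity]
      have h2 : Even k.totient := Nat.totient_even hk
      have hpos : 0 < k.totient := Nat.totient_pos.mpr hk0
      rcases h2 with ⟨t, ht⟩; omega
    obtain ⟨χ, hχ⟩ := Fintype.exists_ne_of_one_lt_card hcard 1
    exact ⟨χ, hχ⟩
  have hΔ0 : 0 ≤ Δ := le_trans (norm_nonneg _) (hΔ χ₁ hχ₁)
  -- Step 1: factor out Δ
  have step1 : ∑ χ ∈ Finset.univ.filter (fun χ : DirichletCharacter ℂ k => χ ≠ 1),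
      A χ * B χ * ‖∑ p ∈ (Finset.Icc 1 y).filter Nat.Prime, χ (p : ZMod k)‖ ≤
      Δ * ∑ χ ∈ Finset.univ.filter (fun χ : DirichletCharacter ℂ k => χ ≠ 1), A χ * B χ := by
    rw [Finset.mul_sum]
    refine Finset.sum_le_sum fun χ hχ => ?_
    rw [Finset.mem_filter] at hχ
    calc A χ * B χ * ‖∑ p ∈ (Finset.Icc 1 y).filter Nat.Prime, χ (p : ZMod k)‖
        ≤ A χ * B χ * Δ := by
          refine mul_le_mul_of_nonneg_left (hΔ χ hχ.2) (by positivity)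
      _ = Δ * (A χ * B χ) := by ring
  -- Step 2: Cauchy–Schwarz
  have step2 : ∑ χ ∈ Finset.univ.filter (fun χ : DirichletCharacter ℂ k => χ ≠ 1), A χ * B χ ≤
      Real.sqrt (∑ χ : DirichletCharacter ℂ k, A χ ^ 2) *
        Real.sqrt (∑ χ : DirichletCharacter ℂ k, B χ ^ 2) := by
    have h1 : ∑ χ ∈ Finset.univ.filter (fun χ : DirichletCharacter ℂ k => χ ≠ 1), A χ * B χ ≤
        ∑ χ : DirichletCharacter ℂ k, A χ * B χ :=
      Finset.sum_le_sum_of_subset_of_nonneg (Finset.filter_subset _ _)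
        (fun χ _ _ => by positivity)
    refine h1.trans ?_
    have h2 := Finset.sum_mul_sq_le_sq_mul_sq Finset.univ A B
    have h3 : ∑ χ : DirichletCharacter ℂ k, A χ * B χ =
        Real.sqrt ((∑ χ : DirichletCharacter ℂ k, A χ * B χ) ^ 2) :=
      (Real.sqrt_sq (by positivity)).symm
    rw [h3, ← Real.sqrt_mul (by positivity)]
    exact Real.sqrt_le_sqrt h2
  -- Mean value bound for A
  have hAbound : ∑ χ : DirichletCharacter ℂ k, A χ ^ 2 ≤
      (k.totient : ℝ) * (((M : ℝ) / k + 1) * M) := by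
    have hcount : ∀ r : ZMod k,
        ((((Finset.Ioc M (2 * M)).filter fun n : ℕ => (n : ZMod k) = r).card : ℝ)) ≤
          (M : ℝ) / k + 1 := by
      intro r
      refine le_trans (TypeIIAux.card_residue_Ioc M (2 * M) (by omega) r) (le_of_eq ?_)
      push_cast; ring
    have hmv := TypeIIAux.mean_value (k := k) (Finset.Ioc M (2 * M)) a ((M : ℝ) / k + 1) hcount
    refine hmv.trans ?_
    rw [mul_assoc]
    refine mul_le_mul_of_nonneg_left ?_ (by positivity)
    have hs : ∑ m ∈ Finset.Ioc M (2 * M), ‖a m‖ ^ 2 ≤ (M : ℝ) := by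
      calc ∑ m ∈ Finset.Ioc M (2 * M), ‖a m‖ ^ 2 ≤ ∑ m ∈ Finset.Ioc M (2 * M), (1 : ℝ) :=
            Finset.sum_le_sum fun m _ => pow_le_one₀ (norm_nonneg _) (ha m)
        _ = ((Finset.Ioc M (2 * M)).card : ℝ) := by simp
        _ = (M : ℝ) := by rw [Nat.card_Ioc]; push_cast; ring_nf; norm_cast; omega
    exact mul_le_mul_of_nonneg_left hs (by positivity)
  -- Mean value bound for B
  have hBbound : ∑ χ : DirichletCharacter ℂ k, B χ ^ 2 ≤
      (k.totient : ℝ) * ((x / ((M : ℝ) * k) + 1) * (x / M)) := by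
    have hIcc : Finset.Icc 1 N = Finset.Ioc 0 N := by
      rw [← Finset.Icc_add_one_left_eq_Ioc]; rfl
    have hcount : ∀ r : ZMod k,
        ((((Finset.Icc 1 N).filter fun n : ℕ => (n : ZMod k) = r).card : ℝ)) ≤
          x / ((M : ℝ) * k) + 1 := by
      intro r
      rw [hIcc]
      refine le_trans (TypeIIAux.card_residue_Ioc 0 N (Nat.zero_le _) r) ?_
      have : ((N : ℝ) - 0) / k ≤ x / ((M : ℝ) * k) := by
        rw [sub_zero, ← div_div]
        gcongr
      linarith
    have hmv := TypeIIAux.mean_value (k := k) (Finset.Icc 1 N) b (x / ((M : ℝ) * k) + 1) hcount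
    refine hmv.trans ?_
    rw [mul_assoc]
    refine mul_le_mul_of_nonneg_left ?_ (by positivity)
    have hs : ∑ n ∈ Finset.Icc 1 N, ‖b n‖ ^ 2 ≤ x / M := by
      calc ∑ n ∈ Finset.Icc 1 N, ‖b n‖ ^ 2 ≤ ∑ n ∈ Finset.Icc 1 N, (1 : ℝ) :=
            Finset.sum_le_sum fun n _ => pow_le_one₀ (norm_nonneg _) (hb n)
        _ = ((Finset.Icc 1 N).card : ℝ) := by simp
        _ ≤ (N : ℝ) := by rw [Nat.card_Icc]; push_cast; simp
        _ ≤ x / M := hNle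
    refine mul_le_mul_of_nonneg_left hs (by positivity)
  -- Assemble
  have hfinal : Δ * (Real.sqrt (∑ χ : DirichletCharacter ℂ k, A χ ^ 2) *
        Real.sqrt (∑ χ : DirichletCharacter ℂ k, B χ ^ 2)) ≤
      Δ * (Nat.totient k : ℝ) * Real.sqrt (((M : ℝ) / k + 1) * M) *
        Real.sqrt ((x / ((M : ℝ) * k) + 1) * (x / M)) := by
    have hst : Real.sqrt (k.totient : ℝ) * Real.sqrt (k.totient : ℝ) = (k.totient : ℝ) :=
      Real.mul_self_sqrt (by positivity)
    have h1 : Real.sqrt (∑ χ : DirichletCharacter ℂ k, A χ ^ 2) ≤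
        Real.sqrt (k.totient : ℝ) * Real.sqrt (((M : ℝ) / k + 1) * M) := by
      rw [← Real.sqrt_mul (by positivity)]
      exact Real.sqrt_le_sqrt hAbound
    have h2 : Real.sqrt (∑ χ : DirichletCharacter ℂ k, B χ ^ 2) ≤
        Real.sqrt (k.totient : ℝ) * Real.sqrt ((x / ((M : ℝ) * k) + 1) * (x / M)) := by
      rw [← Real.sqrt_mul (by positivity)]
      exact Real.sqrt_le_sqrt hBbound
    calc Δ * (Real.sqrt (∑ χ : DirichletCharacter ℂ k, A χ ^ 2) *
          Real.sqrt (∑ χ : DirichletCharacter ℂ k, B χ ^ 2))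
        ≤ Δ * ((Real.sqrt (k.totient : ℝ) * Real.sqrt (((M : ℝ) / k + 1) * M)) *
            (Real.sqrt (k.totient : ℝ) * Real.sqrt ((x / ((M : ℝ) * k) + 1) * (x / M)))) := by
          refine mul_le_mul_of_nonneg_left ?_ hΔ0
          exact mul_le_mul h1 h2 (Real.sqrt_nonneg _) (by positivity)
      _ = Δ * (Real.sqrt (k.totient : ℝ) * Real.sqrt (k.totient : ℝ)) *
            (Real.sqrt (((M : ℝ) / k + 1) * M) *
              Real.sqrt ((x / ((M : ℝ) * k) + 1) * (x / M))) := by ring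
      _ = Δ * (Nat.totient k : ℝ) * Real.sqrt (((M : ℝ) / k + 1) * M) *
            Real.sqrt ((x / ((M : ℝ) * k) + 1) * (x / M)) := by rw [hst]; ring
  have hchain := le_trans step1 (le_trans (mul_le_mul_of_nonneg_left step2 hΔ0) hfinal)
  convert hchain using 2
  ext χ
  simp [Finset.mem_filter]
  ext χ
  simp
end
end
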